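/- Assume k = 2. In the generic band situation there exists a polynomial φ̃_1* ∈ R such that φ̃_1 · φ̃_1* = a_{31}a_{12} · φ̃_2² + c̃_1 · φ̃_2 + a_{11}a_{13}⋯a_{1n} · a_{32}⋯a_{3n}, where c̃_1 = (−1)^{n−1} c_1. -/

import Mathlib

open Matrix Finset

noncomputable section

/-- The determinant of the minor of the `ℕ`-indexed (0-based) matrix `Φ` on the 1-based
row/column range `[i, M]`; for `i = M + 1` this is the determinant of the empty matrix, `1`. -/
def sminor {α : Type*} [CommRing α] (Φ : ℕ → ℕ → α) (i M : ℕ) : α :=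
  (Matrix.of fun r c : Fin (M + 1 - i) => Φ (i - 1 + (r : ℕ)) (i - 1 + (c : ℕ))).det

/-- Package an `ℕ`-indexed (0-based) family of entries as an `n × n` matrix. -/
def toSq {α : Type*} (n : ℕ) (f : ℕ → ℕ → α) : Matrix (Fin n) (Fin n) α :=
  Matrix.of fun i j => f (i : ℕ) (j : ℕ)

/-- The core `Φ` of a staircase pair `(X, Y)` of `n × n` matrices with parameters
`a = k + b`; it is an `N × N` matrix, `N = (k-1)*n + b`, given here as a (0-based)
`ℕ`-indexed family of entries.  For `1 ≤ j ≤ k-1` (1-based), the block rows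
`(j-1)(n-1)+1 .. j(n-1)` carry `Y_{[2,n]}` in columns `(j-1)n+1 .. jn` and (for `j ≥ 2`)
`X_{[2,n]}` in columns `(j-2)n+1 .. (j-1)n`; the last `a - 1` rows carry `X_{[2,a]}` in
columns `(k-2)n+1 .. (k-1)n` and `Y_{[2,a]}^{[1,b]}` in columns `(k-1)n+1 .. N`. -/
def stairCore {α : Type*} [Zero α] (n k : ℕ) (Xf Yf : ℕ → ℕ → α) : ℕ → ℕ → α := fun r c =>
  if r < (k - 1) * (n - 1) then
    if r / (n - 1) * n ≤ c ∧ c < r / (n - 1) * n + n then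
      Yf (r % (n - 1) + 1) (c - r / (n - 1) * n)
    else if 1 ≤ r / (n - 1) ∧ (r / (n - 1) - 1) * n ≤ c ∧ c < r / (n - 1) * n then
      Xf (r % (n - 1) + 1) (c - (r / (n - 1) - 1) * n)
    else 0
  else
    if (k - 2) * n ≤ c ∧ c < (k - 1) * n then
      Xf (r - (k - 1) * (n - 1) + 1) (c - (k - 2) * n)
    else if (k - 1) * n ≤ c then
      Yf (r - (k - 1) * (n - 1) + 1) (c - (k - 1) * n)
    else 0

/-- `det Ȳ`: determinant of the submatrix of `Y` on rows and columns `2..n` (1-based). -/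
def detYbar {α : Type*} [CommRing α] (n : ℕ) (Yf : ℕ → ℕ → α) : α :=
  (Matrix.of fun i j : Fin (n - 1) => Yf ((i : ℕ) + 1) ((j : ℕ) + 1)).det

/-- Determinant of the minor of `Y` on rows `{1, 3, 4, …, n}` and columns `{2, …, n}`
(1-based). -/
def detYgamma {α : Type*} [CommRing α] (n : ℕ) (Yf : ℕ → ℕ → α) : α :=
  (Matrix.of fun i j : Fin (n - 1) =>
    Yf (if (i : ℕ) = 0 then 0 else (i : ℕ) + 1) ((j : ℕ) + 1)).det

/-- `det (λ Y + μ X)` as a polynomial in the two variables `λ = X 0`, `μ = X 1`. -/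
def detLM {α : Type*} [CommRing α] (n : ℕ) (Xf Yf : ℕ → ℕ → α) :
    MvPolynomial (Fin 2) α :=
  Matrix.det
    (((MvPolynomial.X 0 : MvPolynomial (Fin 2) α) • (toSq n Yf).map (fun p => MvPolynomial.C p)
      + (MvPolynomial.X 1 : MvPolynomial (Fin 2) α) • (toSq n Xf).map (fun p => MvPolynomial.C p)
      : Matrix (Fin n) (Fin n) (MvPolynomial (Fin 2) α)))

/-- The block `Y2`: submatrix of `Y` on rows `k+1 .. k+b` and columns `1 .. b` (1-based). -/
def blockY2 (n k b : ℕ) (h : k + b ≤ n) (Y : Matrix (Fin n) (Fin n) ℂ) :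
    Matrix (Fin b) (Fin b) ℂ :=
  Matrix.of fun i j => Y ⟨k + (i : ℕ), by have := i.isLt; omega⟩ (Fin.castLE (by omega) j)

/-- The `k × k` matrix `U = W11 - Y1 Y2⁻¹ W21` attached to a staircase pair `(X, Y)`,
where `[[W11, W12], [W21, W22]]` is the `a × a` leading block of `X Y⁻¹` (`W11` of size
`k × k`) and `[Y1; Y2]` is the submatrix of `Y` on rows `1..a`, columns `1..b`. -/
def blockU (n k b : ℕ) (h : k + b ≤ n) (X Y : Matrix (Fin n) (Fin n) ℂ) :
    Matrix (Fin k) (Fin k) ℂ :=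
  (Matrix.of fun i j : Fin k =>
      (X * Y⁻¹) (Fin.castLE (by omega) i) (Fin.castLE (by omega) j))
    - (Matrix.of fun (i : Fin k) (j : Fin b) =>
          Y (Fin.castLE (by omega) i) (Fin.castLE (by omega) j))
      * (blockY2 n k b h Y)⁻¹
      * (Matrix.of fun (i : Fin b) (j : Fin k) =>
          (X * Y⁻¹) ⟨k + (i : ℕ), by have := i.isLt; omega⟩ (Fin.castLE (by omega) j))

/-- The standard basis vector `e_{m+1}` (so `basisVec k 0 = e_1`, `basisVec k 1 = e_2`). -/
def basisVec (k m : ℕ) : Fin k → ℂ := fun i => if (i : ℕ) = m then 1 else 0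

/-- The vector `v_γ = U (e_2 + γ e_1)`, with `γ` the ratio of the minor of `Y` on rows
`{1,3,…,n}`, columns `{2,…,n}` by `det Ȳ`. -/
def vGamma (n k b : ℕ) (h : k + b ≤ n) (X Y : ℕ → ℕ → ℂ) : Fin k → ℂ :=
  (blockU n k b h (toSq n X) (toSq n Y)).mulVec
    (basisVec k 1 + (detYgamma n Y / detYbar n Y) • basisVec k 0)

/-- The coefficient ring for the generic staircase pair: polynomials over `ℂ` in the
variables `x_{ij}` (tagged `true`) and `y_{ij}` (tagged `false`). -/
abbrev Rgen : Type := MvPolynomial (Bool × ℕ × ℕ) ℂ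

/-- The generic staircase matrix `X` (0-based): `x_{ij}` for `i < a`, `b ≤ j < n`, else `0`. -/
def genX (n a b : ℕ) : ℕ → ℕ → Rgen := fun i j =>
  if i < a ∧ b ≤ j ∧ j < n then MvPolynomial.X (true, i, j) else 0

/-- The generic staircase matrix `Y` (0-based): `y_{ij}` except in the zero block
(`i ≥ a`, `j < b`). -/
def genY (n a b : ℕ) : ℕ → ℕ → Rgen := fun i j =>
  if i < n ∧ j < n ∧ ¬(a ≤ i ∧ j < b) then MvPolynomial.X (false, i, j) else 0

/-- The coefficient ring for the generic band pair: polynomials over `ℂ` in variables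
`a_{ij}`. -/
abbrev Rband : Type := MvPolynomial (ℕ × ℕ) ℂ

/-- The generic band entries `a_{ij}` (1-based). -/
def genA : ℕ → ℕ → Rband := fun i j => MvPolynomial.X (i, j)

/-- The band matrix `X` (0-based indices) built from the entries `a_{ij}` (1-based):
`X_{i, n-k+i-1+s} = a_{s,i}` for `1 ≤ i ≤ k`, `1 ≤ s ≤ k+1-i` (1-based). -/
def bandX {α : Type*} [Zero α] (n k : ℕ) (a : ℕ → ℕ → α) : ℕ → ℕ → α := fun i j =>
  if i < k ∧ n - k + i ≤ j ∧ j < n then a (j + k + 1 - n - i) (i + 1) else 0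

/-- The band matrix `Y` (0-based indices) built from the entries `a_{ij}` (1-based):
`Y_{ij} = a_{k+1-i+j, i}` for `max(1, i-k) ≤ j ≤ i` (1-based), `0` otherwise. -/
def bandY {α : Type*} [Zero α] (n k : ℕ) (a : ℕ → ℕ → α) : ℕ → ℕ → α := fun i j =>
  if j ≤ i ∧ i ≤ j + k ∧ i < n then a (k + 1 + j - i) (i + 1) else 0

/-- Top-left `k × k` block of `X * Y⁻¹`. -/
def bandUblock (n k : ℕ) (h : k ≤ n) (Xm Ym : Matrix (Fin n) (Fin n) ℂ) :
    Matrix (Fin k) (Fin k) ℂ :=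
  Matrix.of fun i j => (Xm * Ym⁻¹) (Fin.castLE h i) (Fin.castLE h j)

/-- `K(A;u) = [u, Au, …, A^{k-1}u]`. -/
def Kmat (k : ℕ) (A : Matrix (Fin k) (Fin k) ℂ) (u : Fin k → ℂ) :
    Matrix (Fin k) (Fin k) ℂ :=
  Matrix.of fun i j => (A ^ (j : ℕ)).mulVec u i

/-- `K1(A;u,v) = [v, u, Au, …, A^{k-2}u]`. -/
def K1mat (k : ℕ) (A : Matrix (Fin k) (Fin k) ℂ) (u v : Fin k → ℂ) :
    Matrix (Fin k) (Fin k) ℂ :=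
  Matrix.of fun i j => if (j : ℕ) = 0 then v i else (A ^ ((j : ℕ) - 1)).mulVec u i

/-- `K2(A;u,v) = [Av, u, Au, …, A^{k-2}u]`. -/
def K2mat (k : ℕ) (A : Matrix (Fin k) (Fin k) ℂ) (u v : Fin k → ℂ) :
    Matrix (Fin k) (Fin k) ℂ :=
  Matrix.of fun i j => if (j : ℕ) = 0 then A.mulVec v i else (A ^ ((j : ℕ) - 1)).mulVec u i

/-- `w`: the last row of the classical adjoint of `K1(A;u,v)`. -/
def wRow (k : ℕ) (A : Matrix (Fin k) (Fin k) ℂ) (u v : Fin k → ℂ) : Fin k → ℂ :=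
  fun j => (K1mat k A u v).adjugate ⟨k - 1, by have := j.isLt; omega⟩ j

/-- `K*(A;u,v)`: the matrix with rows `w, wA, …, wA^{k-1}`. -/
def Kstar (k : ℕ) (A : Matrix (Fin k) (Fin k) ℂ) (u v : Fin k → ℂ) :
    Matrix (Fin k) (Fin k) ℂ :=
  Matrix.of fun i j => Matrix.vecMul (wRow k A u v) (A ^ (i : ℕ)) j

/-- Extend a `k × k` matrix by zero to an `ℕ`-indexed family of entries. -/
def extMat {α : Type*} [Zero α] (k : ℕ) (M : Matrix (Fin k) (Fin k) α) : ℕ → ℕ → α :=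
  fun i j => if h : i < k ∧ j < k then M ⟨i, h.1⟩ ⟨j, h.2⟩ else 0

namespace SC14

variable {α : Type*} [CommRing α]

def tri (dd uu ll : ℕ → α) : ℕ → ℕ → α := fun r c =>
  if r = c then dd r else if r + 1 = c then uu r else if c + 1 = r then ll c else 0

def cont (dd q : ℕ → α) : ℕ → ℕ → α
  | _, 0 => 1
  | o, 1 => dd o
  | o, (m+2) => dd o * cont dd q (o+1) (m+1) - q o * cont dd q (o+2) m

lemma tri_congr (dd uu ll : ℕ → α) {r c r' c' : ℕ} (hr : r = r') (hc : c = c') :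
    tri dd uu ll r c = tri dd uu ll r' c' := by rw [hr, hc]

lemma tri_eq_zero (dd uu ll : ℕ → α) {r c : ℕ} (h1 : r ≠ c) (h2 : r + 1 ≠ c) (h3 : c + 1 ≠ r) :
    tri dd uu ll r c = 0 := by
  simp only [tri, if_neg h1, if_neg h2, if_neg h3]

lemma det_tri (dd uu ll : ℕ → α) :
    ∀ m o, (Matrix.of fun r c : Fin m => tri dd uu ll (o + (r : ℕ)) (o + (c : ℕ))).det
      = cont dd (fun i => uu i * ll i) o m := by
  intro m
  induction m using Nat.strong_induction_on with
  | _ m ih =>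
    intro o
    match m with
    | 0 => simp [cont]
    | 1 => simp [cont, tri]
    | (m+2) =>
      set A : Matrix (Fin (m+2)) (Fin (m+2)) α :=
        Matrix.of fun r c : Fin (m+2) => tri dd uu ll (o + (r : ℕ)) (o + (c : ℕ)) with hA
      have h00 : A 0 0 = dd o := by simp [hA, tri]
      have h10 : A ((0 : Fin (m+1)).succ) 0 = ll o := by
        show tri dd uu ll (o + ((0 : Fin (m+1)).succ : ℕ)) (o + ((0 : Fin (m+2)) : ℕ)) = ll o
        simp only [Fin.val_succ, Fin.val_zero, Nat.add_zero]
        rw [tri]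
        rw [if_neg (by omega), if_neg (by omega), if_pos (by omega)]
      have e0 : A.submatrix (0 : Fin (m+2)).succAbove Fin.succ
          = Matrix.of (fun r c : Fin (m+1) => tri dd uu ll ((o+1) + (r:ℕ)) ((o+1) + (c:ℕ))) := by
        ext r c
        simp only [Matrix.submatrix_apply, Fin.zero_succAbove, hA, Matrix.of_apply, Fin.val_succ]
        exact tri_congr _ _ _ (by omega) (by omega)
      set B := A.submatrix ((0 : Fin (m+1)).succ).succAbove Fin.succ with hB
      have hone : ((0 : Fin (m+1)).succ) = (1 : Fin (m+2)) := by ext; simp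
      have hBtop : ∀ j : Fin (m+1), B 0 j = tri dd uu ll o (o + (j:ℕ) + 1) := by
        intro j
        show A (((0 : Fin (m+1)).succ).succAbove 0) (Fin.succ j) = _
        rw [hone, Fin.succAbove_of_castSucc_lt _ _ (by simp [Fin.lt_def])]
        simp only [hA, Matrix.of_apply, Fin.castSucc_zero, Fin.val_zero, Nat.add_zero,
          Fin.val_succ]
        exact tri_congr _ _ _ rfl (by omega)
      have hBdet : B.det = uu o * cont dd (fun i => uu i * ll i) (o+2) m := by
        rw [Matrix.det_succ_row_zero, Fin.sum_univ_succ]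
        have htail : ∀ j : Fin m,
            (-1 : α) ^ ((j.succ : Fin (m+1)) : ℕ) * B 0 j.succ *
              (B.submatrix Fin.succ (j.succ).succAbove).det = 0 := by
          intro j
          rw [hBtop]
          rw [tri_eq_zero dd uu ll (by simp only [Fin.val_succ]; omega)
            (by simp only [Fin.val_succ]; omega) (by simp only [Fin.val_succ]; omega)]
          ring
        rw [Finset.sum_congr rfl (fun j _ => htail j), Finset.sum_const, smul_zero, add_zero]
        rw [hBtop]
        have h01 : tri dd uu ll o (o + ((0 : Fin (m+1)):ℕ) + 1) = uu o := by
          have hv : (o + ((0 : Fin (m+1)):ℕ) + 1) = o + 1 := by simp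
          rw [hv, tri]
          rw [if_neg (by omega), if_pos rfl]
        rw [h01]
        have e2 : B.submatrix Fin.succ ((0 : Fin (m+1)).succAbove)
            = Matrix.of (fun r c : Fin m => tri dd uu ll ((o+2) + (r:ℕ)) ((o+2) + (c:ℕ))) := by
          ext r c
          show A ((((0 : Fin (m+1)).succ)).succAbove (Fin.succ r))
            (Fin.succ ((0 : Fin (m+1)).succAbove c)) = _
          rw [hone, Fin.succAbove_of_le_castSucc _ _ (by simp [Fin.le_def]), Fin.zero_succAbove]
          simp only [hA, Matrix.of_apply, Fin.val_succ]
          exact tri_congr _ _ _ (by omega) (by omega)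
        rw [e2, ih m (by omega) (o+2)]
        simp
      rw [Matrix.det_succ_column_zero, Fin.sum_univ_succ, Fin.sum_univ_succ]
      have htail : ∀ i : Fin m,
          (-1 : α) ^ (((i.succ.succ : Fin (m+2))) : ℕ) * A i.succ.succ 0 *
            ((A.submatrix (i.succ.succ).succAbove Fin.succ).det) = 0 := by
        intro i
        have hz : A i.succ.succ 0 = 0 := by
          show tri dd uu ll (o + ((i.succ.succ : Fin (m+2)) : ℕ)) (o + ((0 : Fin (m+2)) : ℕ)) = 0
          exact tri_eq_zero dd uu ll (by simp only [Fin.val_succ, Fin.val_zero]; omega)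
            (by simp only [Fin.val_succ, Fin.val_zero]; omega)
            (by simp only [Fin.val_succ, Fin.val_zero]; omega)
        rw [hz]; ring
      rw [Finset.sum_congr rfl (fun i _ => htail i), Finset.sum_const, smul_zero, add_zero]
      rw [h00, h10, e0, ih (m+1) (by omega) (o+1), hBdet]
      have hcont : cont dd (fun i => uu i * ll i) o (m+2)
          = dd o * cont dd (fun i => uu i * ll i) (o+1) (m+1)
            - (uu o * ll o) * cont dd (fun i => uu i * ll i) (o+2) m := rfl
      rw [hcont]
      simp only [Fin.val_zero, Fin.val_succ, pow_zero, pow_succ, pow_zero]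
      ring

lemma cont_dj (dd q : ℕ → α) :
    ∀ m o, cont dd q o (m+2) * cont dd q (o+1) m - cont dd q o (m+1) * cont dd q (o+1) (m+1)
      = - ∏ i ∈ Finset.range (m+1), q (o+i) := by
  intro m
  induction m with
  | zero => intro o; simp [cont]
  | succ m ih =>
    intro o
    have h1 : cont dd q o (m+3) = dd o * cont dd q (o+1) (m+2) - q o * cont dd q (o+2) (m+1) :=
      rfl
    have h2 : cont dd q o (m+2) = dd o * cont dd q (o+1) (m+1) - q o * cont dd q (o+2) m := rfl
    have hprod : ∏ i ∈ Finset.range (m+2), q (o+i)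
        = q o * ∏ i ∈ Finset.range (m+1), q ((o+1)+i) := by
      rw [Finset.prod_range_succ']
      rw [mul_comm]
      congr 1
      · apply Finset.prod_congr rfl; intro i _; congr 1; omega
    rw [h1, h2, hprod]
    linear_combination (q o) * ih (o+1)

/-! ### Band-specific layer -/

def dF : ℕ → Rband := fun i => genA 2 (i+2)
def uF : ℕ → Rband := fun i => genA 3 (i+2)
def lF : ℕ → Rband := fun i => genA 1 (i+3)

lemma genA_congr {i j i' j' : ℕ} (h1 : i = i') (h2 : j = j') : genA i j = genA i' j' := by
  rw [h1, h2]

lemma bandY_tri (m r c : ℕ) (hr : r < m + 2) :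
    bandY (m+3) 2 genA (r+1) c = tri dF uF lF r c := by
  simp only [bandY, tri, dF, uF, lF]
  split_ifs with h1 h2 h3 h4 <;>
    first
      | rfl
      | (exact genA_congr (by omega) (by omega))
      | (exfalso; omega)

lemma bandY_row0 (m c : ℕ) (hc : 1 ≤ c) : bandY (m+3) 2 genA 0 c = 0 := by
  simp only [bandY]
  rw [if_neg (by omega)]

lemma bandY_00 (m : ℕ) : bandY (m+3) 2 genA 0 0 = genA 3 1 := by
  simp only [bandY]
  rw [if_pos (by omega)]

lemma bandY_lastcol (m i : ℕ) (hi : i < m + 1) : bandY (m+3) 2 genA (i+1) (m+2) = 0 := by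
  simp only [bandY]
  rw [if_neg (by omega)]

lemma bandY_corner (m : ℕ) : bandY (m+3) 2 genA (m+2) (m+2) = genA 3 (m+3) := by
  simp only [bandY]
  rw [if_pos (by omega)]
  exact genA_congr (by omega) (by omega)

lemma bandX_zero0 (m j : ℕ) (hj : j < m+1) : bandX (m+3) 2 genA 0 j = 0 := by
  simp only [bandX]
  rw [if_neg (by omega)]

lemma bandX_zero1 (m j : ℕ) (hj : j < m+2) : bandX (m+3) 2 genA 1 j = 0 := by
  simp only [bandX]
  rw [if_neg (by omega)]

lemma bandX_zeroHi (m i j : ℕ) (hi : 2 ≤ i) : bandX (m+3) 2 genA i j = 0 := by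
  simp only [bandX]
  rw [if_neg (by omega)]

lemma bandX_0a (m : ℕ) : bandX (m+3) 2 genA 0 (m+1) = genA 1 1 := by
  simp only [bandX]
  rw [if_pos (by omega)]
  exact genA_congr (by omega) (by omega)

lemma bandX_0b (m : ℕ) : bandX (m+3) 2 genA 0 (m+2) = genA 2 1 := by
  simp only [bandX]
  rw [if_pos (by omega)]
  exact genA_congr (by omega) (by omega)

lemma bandX_1 (m : ℕ) : bandX (m+3) 2 genA 1 (m+2) = genA 1 2 := by
  simp only [bandX]
  rw [if_pos (by omega)]
  exact genA_congr (by omega) (by omega)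

lemma detB1 (m : ℕ) :
    (Matrix.updateRow (toSq (m+3) (bandY (m+3) 2 genA)) 0
        (fun j : Fin (m+3) => bandX (m+3) 2 genA 0 (j:ℕ))).det
      = -((-1:Rband)^m * (genA 1 1 * (genA 3 (m+3) * cont dF (fun i => uF i * lF i) 0 (m+1))))
        + (-1:Rband)^m * (genA 2 1 * cont dF (fun i => uF i * lF i) 0 (m+2)) := by
  set A := Matrix.updateRow (toSq (m+3) (bandY (m+3) 2 genA)) 0
      (fun j : Fin (m+3) => bandX (m+3) 2 genA 0 (j:ℕ)) with hA
  have hrow : ∀ (i : Fin (m+2)) (j : Fin (m+3)),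
      A (Fin.succ i) j = bandY (m+3) 2 genA ((i:ℕ)+1) (j:ℕ) := by
    intro i j
    rw [hA, Matrix.updateRow_ne (Fin.succ_ne_zero i)]
    rfl
  have htop : ∀ j : Fin (m+3), A 0 j = bandX (m+3) 2 genA 0 (j:ℕ) := by
    intro j; rw [hA, Matrix.updateRow_self]
  rw [Matrix.det_succ_row_zero, Fin.sum_univ_castSucc, Fin.sum_univ_castSucc]
  have htail : ∀ j : Fin (m+1),
      (-1:Rband) ^ ((j.castSucc.castSucc : Fin (m+3)) : ℕ) * A 0 j.castSucc.castSucc *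
        (A.submatrix Fin.succ (j.castSucc.castSucc).succAbove).det = 0 := by
    intro j
    have hj := j.isLt
    have hz : A 0 j.castSucc.castSucc = 0 := by
      rw [htop]
      simp only [Fin.coe_castSucc]
      exact bandX_zero0 m _ (by omega)
    rw [hz]; ring
  rw [Finset.sum_congr rfl (fun j _ => htail j), Finset.sum_const, smul_zero, zero_add]
  -- the two surviving terms
  have hv1 : (((Fin.last (m+1)).castSucc : Fin (m+3)) : ℕ) = m+1 := by simp
  have hv2 : ((Fin.last (m+2) : Fin (m+3)) : ℕ) = m+2 := by simp
  have hx1 : A 0 (Fin.last (m+1)).castSucc = genA 1 1 := by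
    rw [htop]; simp only [hv1]; exact bandX_0a m
  have hx2 : A 0 (Fin.last (m+2)) = genA 2 1 := by
    rw [htop]; simp only [hv2]; exact bandX_0b m
  -- minor for the very last column
  have hm2 : (A.submatrix Fin.succ (Fin.last (m+2)).succAbove).det
      = cont dF (fun i => uF i * lF i) 0 (m+2) := by
    rw [← det_tri dF uF lF (m+2) 0]
    refine congrArg Matrix.det (Matrix.ext fun r c => ?_)
    simp only [Matrix.submatrix_apply, Fin.succAbove_last, Matrix.of_apply]
    rw [hrow]
    rw [bandY_tri m (r:ℕ) _ r.isLt]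
    exact tri_congr _ _ _ (by omega) (by simp)
  -- minor for column m+1
  have hm1 : (A.submatrix Fin.succ ((Fin.last (m+1)).castSucc).succAbove).det
      = genA 3 (m+3) * cont dF (fun i => uF i * lF i) 0 (m+1) := by
    set B := A.submatrix Fin.succ ((Fin.last (m+1)).castSucc).succAbove with hB
    have hcolbig : ((Fin.last (m+1)).castSucc).succAbove (Fin.last (m+1)) = Fin.last (m+2) := by
      rw [Fin.succAbove_of_le_castSucc _ _ (by simp [Fin.le_def])]
      rfl
    have hcolsmall : ∀ c : Fin (m+1),
        ((Fin.last (m+1)).castSucc).succAbove c.castSucc = c.castSucc.castSucc := by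
      intro c
      rw [Fin.succAbove_of_castSucc_lt _ _ (by have := c.isLt; simp [Fin.lt_def]; omega)]
    rw [Matrix.det_succ_column _ (Fin.last (m+1)), Fin.sum_univ_castSucc]
    have htail2 : ∀ i : Fin (m+1),
        (-1:Rband) ^ (((i.castSucc : Fin (m+2)) : ℕ) + ((Fin.last (m+1) : Fin (m+2)) : ℕ)) *
          B i.castSucc (Fin.last (m+1)) *
          ((B.submatrix i.castSucc.succAbove (Fin.last (m+1)).succAbove).det) = 0 := by
      intro i
      have hi := i.isLt
      have hz : B i.castSucc (Fin.last (m+1)) = 0 := by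
        rw [hB]
        simp only [Matrix.submatrix_apply, hcolbig]
        rw [hrow]
        simp only [Fin.coe_castSucc, hv2]
        exact bandY_lastcol m _ (by omega)
      rw [hz]; ring
    rw [Finset.sum_congr rfl (fun i _ => htail2 i), Finset.sum_const, smul_zero, zero_add]
    have hcorner : B (Fin.last (m+1)) (Fin.last (m+1)) = genA 3 (m+3) := by
      rw [hB]
      simp only [Matrix.submatrix_apply, hcolbig]
      rw [hrow]
      simp only [Fin.val_last, hv2]
      exact bandY_corner m
    have hinner : (B.submatrix (Fin.last (m+1)).succAbove (Fin.last (m+1)).succAbove).det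
        = cont dF (fun i => uF i * lF i) 0 (m+1) := by
      rw [← det_tri dF uF lF (m+1) 0]
      refine congrArg Matrix.det (Matrix.ext fun r c => ?_)
      simp only [Matrix.submatrix_apply, Fin.succAbove_last, hB, hcolsmall]
      rw [hrow]
      simp only [Fin.coe_castSucc]
      rw [bandY_tri m (r:ℕ) _ (by have := r.isLt; omega)]
      exact tri_congr _ _ _ (by omega) (by simp)
    rw [hcorner, hinner]
    have hsg : (-1:Rband) ^ (((Fin.last (m+1) : Fin (m+2)) : ℕ) + ((Fin.last (m+1) : Fin (m+2)) : ℕ)) = 1 := by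
      simp only [Fin.val_last]
      rw [← two_mul, pow_mul]
      norm_num
    rw [hsg, one_mul]
  rw [hx1, hx2, hm1, hm2, hv1, hv2]
  have hp1 : (-1:Rband) ^ (m+1) = -(-1:Rband)^m := by rw [pow_succ]; ring
  have hp2 : (-1:Rband) ^ (m+2) = (-1:Rband)^m := by rw [pow_add]; norm_num
  rw [hp1, hp2]
  ring

lemma detB2 (m : ℕ) :
    (Matrix.updateRow (toSq (m+3) (bandY (m+3) 2 genA)) 1
        (fun j : Fin (m+3) => bandX (m+3) 2 genA 1 (j:ℕ))).det
      = -((-1:Rband)^m * (genA 1 2 * (genA 3 1 * cont dF (fun i => uF i * lF i) 1 (m+1)))) := by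
  set A := Matrix.updateRow (toSq (m+3) (bandY (m+3) 2 genA)) 1
      (fun j : Fin (m+3) => bandX (m+3) 2 genA 1 (j:ℕ)) with hA
  have hone : ((1 : Fin (m+3)) : ℕ) = 1 := rfl
  have hAapp : ∀ (i j : Fin (m+3)), (i:ℕ) ≠ 1 → A i j = bandY (m+3) 2 genA (i:ℕ) (j:ℕ) := by
    intro i j hi
    rw [hA, Matrix.updateRow_ne (by
      intro h
      exact hi (by rw [h]; rfl))]
    rfl
  have htop : ∀ j : Fin (m+3), A 1 j = bandX (m+3) 2 genA 1 (j:ℕ) := by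
    intro j; rw [hA, Matrix.updateRow_self]
  rw [Matrix.det_succ_row A 1, Fin.sum_univ_castSucc]
  have htail : ∀ j : Fin (m+2),
      (-1:Rband) ^ (((1 : Fin (m+3)) : ℕ) + ((j.castSucc : Fin (m+3)) : ℕ)) * A 1 j.castSucc *
        (A.submatrix (1 : Fin (m+3)).succAbove j.castSucc.succAbove).det = 0 := by
    intro j
    have hj := j.isLt
    have hz : A 1 j.castSucc = 0 := by
      rw [htop]
      simp only [Fin.coe_castSucc]
      exact bandX_zero1 m _ (by omega)
    rw [hz]; ring
  rw [Finset.sum_congr rfl (fun j _ => htail j), Finset.sum_const, smul_zero, zero_add]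
  have hv2 : ((Fin.last (m+2) : Fin (m+3)) : ℕ) = m+2 := by simp
  have hx : A 1 (Fin.last (m+2)) = genA 1 2 := by
    rw [htop]; simp only [hv2]; exact bandX_1 m
  have hrone : ∀ r : Fin (m+1), ((1 : Fin (m+3)).succAbove (Fin.succ r)) = Fin.succ (Fin.succ r) := by
    intro r
    rw [Fin.succAbove_of_le_castSucc _ _ (by simp [Fin.le_def])]
  have hrzero : ((1 : Fin (m+3)).succAbove 0) = 0 := by
    rw [Fin.succAbove_of_castSucc_lt _ _ (by simp [Fin.lt_def])]
    rfl
  set B := A.submatrix (1 : Fin (m+3)).succAbove (Fin.last (m+2)).succAbove with hB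
  have hBdet : B.det = genA 3 1 * cont dF (fun i => uF i * lF i) 1 (m+1) := by
    rw [Matrix.det_succ_row_zero, Fin.sum_univ_succ]
    have htail2 : ∀ j : Fin (m+1),
        (-1:Rband) ^ ((j.succ : Fin (m+2)) : ℕ) * B 0 j.succ *
          (B.submatrix Fin.succ (j.succ).succAbove).det = 0 := by
      intro j
      have hz : B 0 j.succ = 0 := by
        rw [hB]
        simp only [Matrix.submatrix_apply, Fin.succAbove_last, hrzero]
        rw [hAapp _ _ (by simp)]
        simp only [Fin.val_zero, Fin.coe_castSucc, Fin.val_succ]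
        exact bandY_row0 m _ (by omega)
      rw [hz]; ring
    rw [Finset.sum_congr rfl (fun j _ => htail2 j), Finset.sum_const, smul_zero, add_zero]
    have h00 : B 0 0 = genA 3 1 := by
      rw [hB]
      simp only [Matrix.submatrix_apply, Fin.succAbove_last, hrzero]
      rw [hAapp _ _ (by simp)]
      simp only [Fin.val_zero, Fin.coe_castSucc]
      exact bandY_00 m
    have hinner : (B.submatrix Fin.succ ((0 : Fin (m+2)).succAbove)).det
        = cont dF (fun i => uF i * lF i) 1 (m+1) := by
      rw [← det_tri dF uF lF (m+1) 1]
      refine congrArg Matrix.det (Matrix.ext fun r c => ?_)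
      simp only [Matrix.submatrix_apply, Fin.zero_succAbove, hB, Fin.succAbove_last, hrone]
      rw [hAapp _ _ (by simp [Fin.val_succ])]
      simp only [Fin.val_succ, Fin.coe_castSucc]
      rw [show (r:ℕ) + 1 + 1 = ((r:ℕ)+1) + 1 from rfl, bandY_tri m _ _ (by omega)]
      exact tri_congr _ _ _ (by omega) (by omega)
    rw [h00, hinner]
    simp
  rw [hx, hBdet, hone, hv2]
  have hp : (-1:Rband) ^ (1+(m+2)) = -(-1:Rband)^m := by
    rw [show 1+(m+2) = m+3 from by omega, pow_add]
    norm_num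
  rw [hp]
  ring

lemma stairCore_low (m r c : ℕ) (hr : r < m+2) (hc : c < m+3) :
    stairCore (m+3) 2 (bandX (m+3) 2 genA) (bandY (m+3) 2 genA) r c
      = bandY (m+3) 2 genA (r+1) c := by
  have e2 : r / (m+3-1) = 0 := Nat.div_eq_of_lt (by omega)
  have e3 : r % (m+3-1) = r := Nat.mod_eq_of_lt (by omega)
  simp only [stairCore, e2, e3]
  rw [if_pos (by omega : r < (2-1) * (m+3-1)),
    if_pos (by omega : 0 * (m+3) ≤ c ∧ c < 0 * (m+3) + (m+3))]
  exact congrArg _ (by omega)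

lemma sminor1 (m : ℕ) :
    sminor (stairCore (m+3) 2 (bandX (m+3) 2 genA) (bandY (m+3) 2 genA)) 1 (m+2)
      = cont dF (fun i => uF i * lF i) 0 (m+2) := by
  rw [← det_tri dF uF lF (m+2) 0]
  simp only [sminor]
  refine congrArg Matrix.det (Matrix.ext fun r c => ?_)
  have hr := r.isLt
  have hc := c.isLt
  simp only [Matrix.of_apply]
  rw [stairCore_low m (1-1+(r:ℕ)) (1-1+(c:ℕ)) (by omega) (by omega)]
  rw [bandY_tri m (1-1+(r:ℕ)) (1-1+(c:ℕ)) (by omega)]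

lemma sminor2 (m : ℕ) :
    sminor (stairCore (m+3) 2 (bandX (m+3) 2 genA) (bandY (m+3) 2 genA)) 2 (m+2)
      = cont dF (fun i => uF i * lF i) 1 (m+1) := by
  rw [← det_tri dF uF lF (m+1) 1]
  simp only [sminor]
  refine congrArg Matrix.det (Matrix.ext fun r c => ?_)
  have hr := r.isLt
  have hc := c.isLt
  simp only [Matrix.of_apply]
  rw [stairCore_low m (2-1+(r:ℕ)) (2-1+(c:ℕ)) (by omega) (by omega)]
  rw [bandY_tri m (2-1+(r:ℕ)) (2-1+(c:ℕ)) (by omega)]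

lemma coeff_lin {a b d a' b' d' : Rband}
    (h : Polynomial.C a + Polynomial.C b * Polynomial.X + Polynomial.C d * Polynomial.X^2
      = Polynomial.C a' + Polynomial.C b' * Polynomial.X + Polynomial.C d' * Polynomial.X^2) :
    b = b' := by
  have h1 := congrArg (fun p : Polynomial Rband => p.coeff 1) h
  simpa [Polynomial.coeff_add, Polynomial.coeff_C_mul, Polynomial.coeff_C,
    Polynomial.coeff_X_one, Polynomial.coeff_X_pow] using h1

lemma coeff1_eq (m : ℕ) (c : ℕ → Rband)
    (hc : detLM (m+3) (bandX (m+3) 2 genA) (bandY (m+3) 2 genA)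
        = (MvPolynomial.X 0 : MvPolynomial (Fin 2) Rband) ^ (m+1)
          * (MvPolynomial.C (c 0) * (MvPolynomial.X 0 : MvPolynomial (Fin 2) Rband) ^ 2
              + MvPolynomial.C (c 1) * (MvPolynomial.X 1 : MvPolynomial (Fin 2) Rband)
                  * (MvPolynomial.X 0 : MvPolynomial (Fin 2) Rband)
              + MvPolynomial.C (c 2)
                  * (MvPolynomial.X 1 : MvPolynomial (Fin 2) Rband) ^ 2)) :
    (Matrix.updateRow (toSq (m+3) (bandY (m+3) 2 genA)) 0
        (fun j : Fin (m+3) => bandX (m+3) 2 genA 0 (j:ℕ))).det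
      + (Matrix.updateRow (toSq (m+3) (bandY (m+3) 2 genA)) 1
        (fun j : Fin (m+3) => bandX (m+3) 2 genA 1 (j:ℕ))).det = c 1 := by
  set ψ : MvPolynomial (Fin 2) Rband →ₐ[Rband] Polynomial Rband :=
    MvPolynomial.aeval (fun i : Fin 2 => if i = 0 then (1 : Polynomial Rband) else Polynomial.X)
    with hψ
  have hX0 : ψ (MvPolynomial.X 0) = 1 := by simp [hψ]
  have hX1 : ψ (MvPolynomial.X 1) = Polynomial.X := by simp [hψ]
  have hCC : ∀ p : Rband, ψ (MvPolynomial.C p) = Polynomial.C p := by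
    intro p
    simp [hψ, MvPolynomial.aeval_C, Polynomial.algebraMap_eq]
  have happ := congrArg ψ hc
  set Ym := toSq (m+3) (bandY (m+3) 2 genA) with hYm
  set Xm := toSq (m+3) (bandX (m+3) 2 genA) with hXm
  set YmC := Ym.map (Polynomial.C : Rband → Polynomial Rband) with hYmC
  set v0 : Fin (m+3) → Polynomial Rband := fun j => Polynomial.C (Xm 0 j) with hv0
  set v1 : Fin (m+3) → Polynomial Rband := fun j => Polynomial.C (Xm 1 j) with hv1
  set bigM : Matrix (Fin (m+3)) (Fin (m+3)) (MvPolynomial (Fin 2) Rband) :=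
    (MvPolynomial.X 0 : MvPolynomial (Fin 2) Rband) • Ym.map (fun p => MvPolynomial.C p)
      + (MvPolynomial.X 1 : MvPolynomial (Fin 2) Rband) • Xm.map (fun p => MvPolynomial.C p)
    with hbigM
  have hmapdet : ψ bigM.det = (bigM.map ψ).det := by
    have h := RingHom.map_det ψ.toRingHom bigM
    simpa [RingHom.mapMatrix_apply] using h
  have hmat : bigM.map ψ
      = Matrix.updateRow (Matrix.updateRow YmC 0 (YmC 0 + (Polynomial.X : Polynomial Rband) • v0)) 1
          (YmC 1 + (Polynomial.X : Polynomial Rband) • v1) := by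
    refine Matrix.ext fun i j => ?_
    have hentry : (bigM.map ψ) i j = Polynomial.C (Ym i j) + Polynomial.X * Polynomial.C (Xm i j) := by
      simp only [hbigM, Matrix.map_apply, Matrix.add_apply, Matrix.smul_apply,
        Matrix.map_apply, smul_eq_mul, map_add, _root_.map_mul, hX0, hX1, hCC, one_mul]
    rw [hentry]
    by_cases h0 : i = 0
    · subst h0
      rw [Matrix.updateRow_ne (by exact (Fin.ne_of_val_ne (by simp))), Matrix.updateRow_self]
      simp only [Pi.add_apply, Pi.smul_apply, smul_eq_mul, hYmC, hv0, Matrix.map_apply]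
    by_cases h1 : i = 1
    · subst h1
      rw [Matrix.updateRow_self]
      simp only [Pi.add_apply, Pi.smul_apply, smul_eq_mul, hYmC, hv1, Matrix.map_apply]
    · rw [Matrix.updateRow_ne h1, Matrix.updateRow_ne h0]
      have hXz : Xm i j = 0 := by
        have hv0' : (i : ℕ) ≠ 0 := fun h => h0 (Fin.ext (by simpa using h))
        have hv1' : (i : ℕ) ≠ 1 := fun h => h1 (Fin.ext (by simpa using h))
        exact bandX_zeroHi m _ _ (by omega)
      simp [hXz, hYmC, Matrix.map_apply]
  -- multilinear expansion
  have hB1 : (Matrix.updateRow YmC 0 v0).det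
      = Polynomial.C (Matrix.updateRow Ym 0 (fun j : Fin (m+3) => bandX (m+3) 2 genA 0 (j:ℕ))).det := by
    have h := RingHom.map_det (Polynomial.C : Rband →+* Polynomial Rband)
      (Matrix.updateRow Ym 0 (fun j : Fin (m+3) => bandX (m+3) 2 genA 0 (j:ℕ)))
    rw [h, RingHom.mapMatrix_apply]
    refine congrArg Matrix.det (Matrix.ext fun i j => ?_)
    by_cases h0 : i = 0
    · subst h0; simp [Matrix.map_apply, hv0, hXm, toSq]
    · simp [Matrix.map_apply, Matrix.updateRow_ne h0, hYmC]
  have hB2 : (Matrix.updateRow YmC 1 v1).det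
      = Polynomial.C (Matrix.updateRow Ym 1 (fun j : Fin (m+3) => bandX (m+3) 2 genA 1 (j:ℕ))).det := by
    have h := RingHom.map_det (Polynomial.C : Rband →+* Polynomial Rband)
      (Matrix.updateRow Ym 1 (fun j : Fin (m+3) => bandX (m+3) 2 genA 1 (j:ℕ)))
    rw [h, RingHom.mapMatrix_apply]
    refine congrArg Matrix.det (Matrix.ext fun i j => ?_)
    by_cases h1 : i = 1
    · subst h1; simp [Matrix.map_apply, hv1, hXm, toSq]
    · simp [Matrix.map_apply, Matrix.updateRow_ne h1, hYmC]
  have hB12 : (Matrix.updateRow (Matrix.updateRow YmC 1 v1) 0 v0).det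
      = Polynomial.C (Matrix.updateRow
          (Matrix.updateRow Ym 1 (fun j : Fin (m+3) => bandX (m+3) 2 genA 1 (j:ℕ)))
          0 (fun j : Fin (m+3) => bandX (m+3) 2 genA 0 (j:ℕ))).det := by
    have h := RingHom.map_det (Polynomial.C : Rband →+* Polynomial Rband)
      (Matrix.updateRow
          (Matrix.updateRow Ym 1 (fun j : Fin (m+3) => bandX (m+3) 2 genA 1 (j:ℕ)))
          0 (fun j : Fin (m+3) => bandX (m+3) 2 genA 0 (j:ℕ)))
    rw [h, RingHom.mapMatrix_apply]
    refine congrArg Matrix.det (Matrix.ext fun i j => ?_)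
    by_cases h0 : i = 0
    · subst h0; simp [Matrix.map_apply, hv0, hXm, toSq]
    by_cases h1 : i = 1
    · subst h1
      simp [Matrix.map_apply, Matrix.updateRow_ne h0, hv1, hXm, toSq]
    · simp [Matrix.map_apply, Matrix.updateRow_ne h0, Matrix.updateRow_ne h1, hYmC]
  have hswap : Matrix.updateRow (Matrix.updateRow YmC 0 (YmC 0 + (Polynomial.X : Polynomial Rband) • v0)) 1 v1
      = Matrix.updateRow (Matrix.updateRow YmC 1 v1) 0 (YmC 0 + (Polynomial.X : Polynomial Rband) • v0) := by
    ext i j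
    by_cases h0 : i = 0
    · subst h0
      rw [Matrix.updateRow_ne (by exact (Fin.ne_of_val_ne (by simp))), Matrix.updateRow_self,
        Matrix.updateRow_self]
    by_cases h1 : i = 1
    · subst h1
      rw [Matrix.updateRow_self, Matrix.updateRow_ne (by exact (Fin.ne_of_val_ne (by simp))),
        Matrix.updateRow_self]
    · rw [Matrix.updateRow_ne h1, Matrix.updateRow_ne h0, Matrix.updateRow_ne h0,
        Matrix.updateRow_ne h1]
  have hexp : (bigM.map ψ).det
      = Polynomial.C Ym.det
        + (Polynomial.C (Matrix.updateRow Ym 0 (fun j : Fin (m+3) => bandX (m+3) 2 genA 0 (j:ℕ))).det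
            + Polynomial.C (Matrix.updateRow Ym 1 (fun j : Fin (m+3) => bandX (m+3) 2 genA 1 (j:ℕ))).det)
          * Polynomial.X
        + Polynomial.C (Matrix.updateRow
            (Matrix.updateRow Ym 1 (fun j : Fin (m+3) => bandX (m+3) 2 genA 1 (j:ℕ)))
            0 (fun j : Fin (m+3) => bandX (m+3) 2 genA 0 (j:ℕ))).det * Polynomial.X^2 := by
    rw [hmat, Matrix.det_updateRow_add, Matrix.det_updateRow_smul, hswap]
    rw [show Matrix.updateRow (Matrix.updateRow YmC 0 (YmC 0 + (Polynomial.X : Polynomial Rband) • v0)) 1 (YmC 1)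
        = Matrix.updateRow YmC 0 (YmC 0 + (Polynomial.X : Polynomial Rband) • v0) from by
      rw [show YmC 1 = (Matrix.updateRow YmC 0 (YmC 0 + (Polynomial.X : Polynomial Rband) • v0)) 1 from
          (Matrix.updateRow_ne (by exact (Fin.ne_of_val_ne (by simp)))).symm,
        Matrix.updateRow_eq_self]]
    rw [Matrix.det_updateRow_add, Matrix.det_updateRow_smul, Matrix.updateRow_eq_self]
    rw [Matrix.det_updateRow_add, Matrix.det_updateRow_smul]
    rw [show Matrix.updateRow (Matrix.updateRow YmC 1 v1) 0 (YmC 0)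
        = Matrix.updateRow YmC 1 v1 from by
      rw [show YmC 0 = (Matrix.updateRow YmC 1 v1) 0 from
          (Matrix.updateRow_ne (by exact (Fin.ne_of_val_ne (by simp)))).symm,
        Matrix.updateRow_eq_self]]
    rw [hB1, hB2, hB12]
    have hYdet : YmC.det = Polynomial.C Ym.det := by
      rw [RingHom.map_det (Polynomial.C : Rband →+* Polynomial Rband) Ym, RingHom.mapMatrix_apply]
    rw [hYdet]
    ring
  -- now identify coefficients
  have hRHS : ψ ((MvPolynomial.X 0 : MvPolynomial (Fin 2) Rband) ^ (m+1)
          * (MvPolynomial.C (c 0) * (MvPolynomial.X 0 : MvPolynomial (Fin 2) Rband) ^ 2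
              + MvPolynomial.C (c 1) * (MvPolynomial.X 1 : MvPolynomial (Fin 2) Rband)
                  * (MvPolynomial.X 0 : MvPolynomial (Fin 2) Rband)
              + MvPolynomial.C (c 2)
                  * (MvPolynomial.X 1 : MvPolynomial (Fin 2) Rband) ^ 2))
      = Polynomial.C (c 0) + Polynomial.C (c 1) * Polynomial.X
          + Polynomial.C (c 2) * Polynomial.X^2 := by
    simp only [_root_.map_mul, map_pow, map_add, hX0, hX1, hCC]
    ring
  have hLHS : ψ (detLM (m+3) (bandX (m+3) 2 genA) (bandY (m+3) 2 genA))
      = Polynomial.C Ym.det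
        + Polynomial.C ((Matrix.updateRow Ym 0 (fun j : Fin (m+3) => bandX (m+3) 2 genA 0 (j:ℕ))).det
            + (Matrix.updateRow Ym 1 (fun j : Fin (m+3) => bandX (m+3) 2 genA 1 (j:ℕ))).det)
          * Polynomial.X
        + Polynomial.C (Matrix.updateRow
            (Matrix.updateRow Ym 1 (fun j : Fin (m+3) => bandX (m+3) 2 genA 1 (j:ℕ)))
            0 (fun j : Fin (m+3) => bandX (m+3) 2 genA 0 (j:ℕ))).det * Polynomial.X^2 := by
    rw [show detLM (m+3) (bandX (m+3) 2 genA) (bandY (m+3) 2 genA) = bigM.det from rfl]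
    rw [hmapdet, hexp, map_add]
  exact coeff_lin (by rw [← hLHS, ← hRHS, happ])

end SC14

/-- the generalized exchange relation for `φ̃_1` in the generic band
situation with `k = 2`. -/
theorem statement14 (n : ℕ) (hn : 2 < n) (c : ℕ → Rband)
    (hc : detLM n (bandX n 2 genA) (bandY n 2 genA)
        = (MvPolynomial.X 0 : MvPolynomial (Fin 2) Rband) ^ (n - 2)
          * (MvPolynomial.C (c 0) * (MvPolynomial.X 0 : MvPolynomial (Fin 2) Rband) ^ 2
              + MvPolynomial.C (c 1) * (MvPolynomial.X 1 : MvPolynomial (Fin 2) Rband)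
                  * (MvPolynomial.X 0 : MvPolynomial (Fin 2) Rband)
              + MvPolynomial.C (c 2)
                  * (MvPolynomial.X 1 : MvPolynomial (Fin 2) Rband) ^ 2)) :
    ∃ φstar : Rband,
      sminor (stairCore n 2 (bandX n 2 genA) (bandY n 2 genA)) 1 (n - 1) * φstar
        = genA 3 1 * genA 1 2
            * (sminor (stairCore n 2 (bandX n 2 genA) (bandY n 2 genA)) 2 (n - 1)) ^ 2
          + (-1 : Rband) ^ (n - 1) * c 1
              * sminor (stairCore n 2 (bandX n 2 genA) (bandY n 2 genA)) 2 (n - 1)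
          + genA 1 1 * (∏ j ∈ Finset.Icc 3 n, genA 1 j)
              * (∏ j ∈ Finset.Icc 2 n, genA 3 j) := by
  obtain ⟨m, rfl⟩ : ∃ m, n = m + 3 := ⟨n - 3, by omega⟩
  clear hn
  simp only [show m+3-1 = m+2 from rfl, show m+3-2 = m+1 from rfl] at hc ⊢
  have hc1 := SC14.coeff1_eq m c hc
  rw [SC14.detB1 m, SC14.detB2 m] at hc1
  rw [SC14.sminor1 m, SC14.sminor2 m]
  have hPt : ∏ j ∈ Finset.Icc 3 (m+3), genA 1 j
      = ∏ i ∈ Finset.range (m+1), genA 1 (3+i) := by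
    rw [← Finset.Ico_add_one_right_eq_Icc, Finset.prod_Ico_eq_prod_range]
    rfl
  have hPs : ∏ j ∈ Finset.Icc 2 (m+3), genA 3 j
      = (∏ i ∈ Finset.range (m+1), genA 3 (2+i)) * genA 3 (m+3) := by
    rw [← Finset.Ico_add_one_right_eq_Icc, Finset.prod_Ico_eq_prod_range]
    rw [show ((m+3+1 - 2 : ℕ)) = m+2 from rfl, Finset.prod_range_succ]
    rw [show genA 3 (2+(m+1)) = genA 3 (m+3) from SC14.genA_congr rfl (by omega)]
  have hq : ∏ i ∈ Finset.range (m+1), (SC14.uF i * SC14.lF i)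
      = (∏ i ∈ Finset.range (m+1), genA 3 (2+i)) * (∏ i ∈ Finset.range (m+1), genA 1 (3+i)) := by
    rw [Finset.prod_mul_distrib]
    congr 1
    · refine Finset.prod_congr rfl fun i _ => ?_
      simp only [SC14.uF]
      exact SC14.genA_congr rfl (by omega)
    · refine Finset.prod_congr rfl fun i _ => ?_
      simp only [SC14.lF]
      exact SC14.genA_congr rfl (by omega)
  have hdj := SC14.cont_dj SC14.dF (fun i => SC14.uF i * SC14.lF i) m 0
  simp only [Nat.zero_add, zero_add] at hdj
  have hsign : (-1:Rband)^m * (-1)^m = 1 := by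
    rw [← pow_add, ← two_mul, pow_mul]
    norm_num
  have hpow : (-1:Rband)^(m+2) = (-1:Rband)^m := by
    rw [pow_add]
    norm_num
  rw [hpow, hPt, hPs]
  refine ⟨genA 2 1 * SC14.cont SC14.dF (fun i => SC14.uF i * SC14.lF i) 1 (m+1)
    - genA 1 1 * genA 3 (m+3) * SC14.cont SC14.dF (fun i => SC14.uF i * SC14.lF i) 1 m, ?_⟩
  linear_combination
    ((-1:Rband)^m * SC14.cont SC14.dF (fun i => SC14.uF i * SC14.lF i) 1 (m+1)) * hc1
    + (genA 1 1 * genA 3 (m+3) * SC14.cont SC14.dF (fun i => SC14.uF i * SC14.lF i) 0 (m+1)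
        * SC14.cont SC14.dF (fun i => SC14.uF i * SC14.lF i) 1 (m+1)
      - genA 2 1 * SC14.cont SC14.dF (fun i => SC14.uF i * SC14.lF i) 0 (m+2)
        * SC14.cont SC14.dF (fun i => SC14.uF i * SC14.lF i) 1 (m+1)
      + genA 3 1 * genA 1 2 * SC14.cont SC14.dF (fun i => SC14.uF i * SC14.lF i) 1 (m+1)
        * SC14.cont SC14.dF (fun i => SC14.uF i * SC14.lF i) 1 (m+1)) * hsign
    + (-(genA 1 1 * genA 3 (m+3))) * hdj
    + (genA 1 1 * genA 3 (m+3)) * hq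


end
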